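/- Let X be a nonempty finite set of pairs (c_i, ρ_i) with c_i ∈ ℝ^d and ρ_i ∈ ℝ, for i = 1, …, m, and define F : ℝ^d → ℝ by F(x) = max_{1 ≤ i ≤ m} (‖x − c_i‖ − ρ_i). Then F attains its global minimum, and the global minimum point is unique: there exists exactly one y ∈ ℝ^d with F(y) = inf_{x ∈ ℝ^d} F(x). -/

import Mathlib

set_option maxHeartbeats 800000

/-- For centers `c₁, …, c_m ∈ ℝ^d` and reals `ρ₁, …, ρ_m` (`m ≥ 1`), the function
`F(x) = max_i (‖x − c_i‖ − ρ_i)` attains its global minimum at a unique point. -/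
theorem exists_unique_min_of_max_dist_sub {d m : ℕ} (hm : 1 ≤ m)
    (c : Fin m → EuclideanSpace ℝ (Fin d)) (rho : Fin m → ℝ)
    (F : EuclideanSpace ℝ (Fin d) → ℝ)
    (hF : ∀ x, IsGreatest (Set.range fun i => ‖x - c i‖ - rho i) (F x)) :
    ∃! y : EuclideanSpace ℝ (Fin d), ∀ x, F y ≤ F x := by
  haveI : NeZero m := ⟨Nat.one_le_iff_ne_zero.mp hm⟩
  have hne : (Finset.univ : Finset (Fin m)).Nonempty := Finset.univ_nonempty
  have hle : ∀ x i, ‖x - c i‖ - rho i ≤ F x := fun x i => (hF x).2 ⟨i, rfl⟩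
  have hFeq : ∀ x, F x = Finset.univ.sup' hne (fun i => ‖x - c i‖ - rho i) := by
    intro x
    refine le_antisymm ?_ (Finset.sup'_le _ _ fun i _ => hle x i)
    obtain ⟨i, hi⟩ := (hF x).1
    rw [← hi]
    exact Finset.le_sup' (fun i => ‖x - c i‖ - rho i) (Finset.mem_univ i)
  -- continuity
  have hcont : Continuous F := by
    have h : Continuous fun x : EuclideanSpace ℝ (Fin d) =>
        Finset.univ.sup' hne (fun i => ‖x - c i‖ - rho i) :=
      Continuous.finset_sup'_apply hne fun i _ =>
        ((continuous_id.sub continuous_const).norm).sub continuous_const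
    exact h.congr fun x => (hFeq x).symm
  -- coercivity
  have i0 : Fin m := ⟨0, hm⟩
  have hcoer : Filter.Tendsto F (Filter.cocompact _) Filter.atTop := by
    apply Filter.tendsto_atTop_mono
      (f := fun x : EuclideanSpace ℝ (Fin d) => ‖x‖ - (‖c i0‖ + rho i0))
    · intro x
      calc ‖x‖ - (‖c i0‖ + rho i0) ≤ ‖x - c i0‖ - rho i0 := by
            have := norm_sub_norm_le x (c i0)
            linarith [norm_sub_rev x (c i0) ▸ this]
        _ ≤ F x := hle x i0
    · have := Filter.tendsto_atTop_add_const_right (Filter.cocompact (EuclideanSpace ℝ (Fin d)))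
        (-(‖c i0‖ + rho i0)) tendsto_norm_cocompact_atTop
      exact this.congr fun x => by ring
  have ⟨y, hy⟩ := hcont.exists_forall_le hcoer
  refine ⟨y, hy, ?_⟩
  intro z hz
  -- both minimizers: F y = F z
  have hV : F z = F y := le_antisymm (hz y) (hy z)
  by_contra hne'
  -- midpoint
  set w := midpoint ℝ z y with hw
  obtain ⟨i, hi⟩ := (hF w).1
  set a := z - c i with hadef
  set b := y - c i with hbdef
  have hwc : w - c i = (2 : ℝ)⁻¹ • (a + b) := by
    have : w - c i = midpoint ℝ a b := by
      simp only [hw, a, b, midpoint_eq_smul_add, smul_add]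
      rw [invOf_eq_inv]
      module
    rw [this, midpoint_eq_smul_add, invOf_eq_inv]
  have h1 : F w = (2 : ℝ)⁻¹ * ‖a + b‖ - rho i := by
    rw [← hi]; dsimp only; rw [hwc, norm_smul]
    norm_num
  have ha : ‖a‖ - rho i ≤ F z := hle z i
  have hb : ‖b‖ - rho i ≤ F y := hle y i
  clear_value a b w
  have h2 : ‖a + b‖ ≤ ‖a‖ + ‖b‖ := norm_add_le a b
  have hmid : F y ≤ F w := hy w
  -- so all inequalities are equalities
  have hVz : F y ≤ F z := hy z
  have heq1 : ‖a + b‖ = ‖a‖ + ‖b‖ := by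
    nlinarith [hmid, h1, h2, ha, hb, hV]
  have heqa : ‖a‖ - rho i = F y := by nlinarith
  have heqb : ‖b‖ - rho i = F y := by nlinarith
  have hnorm : ‖a‖ = ‖b‖ := by linarith
  have hinner : (inner ℝ a b : ℝ) = ‖a‖ * ‖b‖ := by
    have h3 := norm_add_sq_real a b
    rw [heq1] at h3
    nlinarith [h3]
  have hab : a = b := by
    have h4 : ‖a - b‖ ^ 2 = 0 := by
      rw [norm_sub_sq_real]
      nlinarith [hnorm, hinner]
    have := norm_eq_zero.mp (pow_eq_zero_iff (two_ne_zero) |>.mp h4)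
    exact sub_eq_zero.mp this
  have h5 : z - c i = y - c i := by rw [← hadef, ← hbdef]; exact hab
  exact hne' (sub_left_injective h5)
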